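/- Suppose {α_i} and {μ_i} are such that Condition (*) holds (so that T_f is a bounded linear operator). If lim_{i→∞} η_i = 1, then the composition operator T_f : L^p(μ) → L^p(μ) is topologically mixing. -/

import Mathlib

open MeasureTheory Filter Set Topology ENNReal NNReal

noncomputable section

/-- The odometer (the "+1" map, with carry over to the right) on `Π i, Fin (α i)`. -/
def odometer (α : ℕ → ℕ) (x : ∀ i, Fin (α i)) : ∀ i, Fin (α i) :=
  fun i =>
    if ∀ j < i, ((x j : ℕ) + 1 = α j)
    then ⟨((x i : ℕ) + 1) % α i, Nat.mod_lt _ (x i).pos⟩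
    else x i

/-- Topological transitivity of a self-map of a topological space. -/
def TopTransitive {X : Type*} [TopologicalSpace X] (T : X → X) : Prop :=
  ∀ U V : Set X, IsOpen U → IsOpen V → U.Nonempty → V.Nonempty →
    ∃ k : ℕ, 1 ≤ k ∧ (T^[k] '' U ∩ V).Nonempty

/-- Topological mixing of a self-map of a topological space. -/
def TopMixing {X : Type*} [TopologicalSpace X] (T : X → X) : Prop :=
  ∀ U V : Set X, IsOpen U → IsOpen V → U.Nonempty → V.Nonempty →
    ∃ k₀ : ℕ, 1 ≤ k₀ ∧ ∀ k ≥ k₀, (T^[k] '' U ∩ V).Nonempty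

/-- `μ` is the product of the probability measures on the coordinates `Fin (α i)` given by
the weights `w i`: every basic cylinder has measure the product of the weights. -/
def IsProductMeasure (α : ℕ → ℕ) (w : ∀ i, Fin (α i) → NNReal)
    (μ : Measure (∀ i, Fin (α i))) : Prop :=
  ∀ (n : ℕ) (a : ∀ i : Fin n, Fin (α i.1)),
    μ {x | ∀ i : Fin n, x i.1 = a i} = ∏ i : Fin n, (w i.1 (a i) : ENNReal)

/-- Condition (*): there is `c > 0` with `μ B ≥ c • μ (g ⁻¹ B)` for all measurable `B`. -/
def CondStar {X : Type*} [MeasurableSpace X] (μ : Measure X) (g : X → X) : Prop :=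
  ∃ c : ℝ, 0 < c ∧ ∀ B : Set X, MeasurableSet B →
    ENNReal.ofReal c * μ (g ⁻¹' B) ≤ μ B

namespace OdoAux
variable (α : ℕ → ℕ)

def Mp (m : ℕ) : ℕ := ∏ i ∈ Finset.range m, α i

def enc (m : ℕ) (x : ∀ i, Fin (α i)) : ℕ := ∑ i ∈ Finset.range m, (x i : ℕ) * Mp α i

def dig (i e : ℕ) : ℕ := (e / Mp α i) % α i

variable {α}

lemma Mp_succ (m : ℕ) : Mp α (m+1) = Mp α m * α m := Finset.prod_range_succ _ _

lemma Mp_pos (hα : ∀ i, 2 ≤ α i) (m : ℕ) : 0 < Mp α m :=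
  Finset.prod_pos fun i _ => lt_of_lt_of_le (by norm_num) (hα i)

lemma Mp_le (hα : ∀ i, 2 ≤ α i) {a b : ℕ} (h : a ≤ b) : Mp α a ≤ Mp α b := by
  induction b with
  | zero => exact Nat.le_zero.mp h ▸ le_rfl
  | succ n ih =>
    rcases eq_or_lt_of_le h with h' | h'
    · subst h'; rfl
    · calc Mp α a ≤ Mp α n := ih (Nat.lt_succ_iff.mp h')
        _ ≤ Mp α (n+1) := by
          rw [Mp_succ]
          exact Nat.le_mul_of_pos_right _ (by linarith [hα n])

lemma enc_succ (m : ℕ) (x : ∀ i, Fin (α i)) :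
    enc α (m+1) x = enc α m x + (x m : ℕ) * Mp α m := Finset.sum_range_succ _ _

lemma enc_lt (hα : ∀ i, 2 ≤ α i) (m : ℕ) (x : ∀ i, Fin (α i)) : enc α m x < Mp α m := by
  induction m with
  | zero => simpa [enc, Mp] using Nat.zero_lt_one
  | succ n ih =>
    rw [enc_succ, Mp_succ]
    have hx : (x n : ℕ) + 1 ≤ α n := (x n).2
    have h1 : (x n : ℕ) * Mp α n + Mp α n ≤ α n * Mp α n := by
      calc (x n : ℕ) * Mp α n + Mp α n = ((x n : ℕ) + 1) * Mp α n := by ring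
        _ ≤ α n * Mp α n := Nat.mul_le_mul_right _ hx
    have h2 := Nat.mul_comm (α n) (Mp α n)
    omega

/-- `enc m x + 1 = Mp m` iff all digits below `m` are maximal. -/
lemma enc_max_iff (hα : ∀ i, 2 ≤ α i) (m : ℕ) (x : ∀ i, Fin (α i)) :
    enc α m x + 1 = Mp α m ↔ ∀ j < m, (x j : ℕ) + 1 = α j := by
  induction m with
  | zero => simp [enc, Mp]
  | succ n ih =>
    rw [enc_succ, Mp_succ]
    constructor
    · intro h
      have h1 : enc α n x < Mp α n := enc_lt hα n x
      have h2 : (x n : ℕ) + 1 ≤ α n := (x n).2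
      have hMp : 0 < Mp α n := Mp_pos hα n
      have hd : (x n : ℕ) + 1 = α n := by nlinarith
      have he : enc α n x + 1 = Mp α n := by nlinarith
      intro j hj
      rcases Nat.lt_succ_iff_lt_or_eq.mp hj with hj' | hj'
      · exact ih.mp he j hj'
      · subst hj'; exact hd
    · intro h
      have he : enc α n x + 1 = Mp α n := ih.mpr (fun j hj => h j (Nat.lt_succ_of_lt hj))
      have hd : (x n : ℕ) + 1 = α n := h n (Nat.lt_succ_self n)
      calc enc α n x + (x n : ℕ) * Mp α n + 1 = (enc α n x + 1) + (x n : ℕ) * Mp α n := by ring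
        _ = Mp α n + (x n : ℕ) * Mp α n := by rw [he]
        _ = ((x n : ℕ) + 1) * Mp α n := by ring
        _ = α n * Mp α n := by rw [hd]
        _ = Mp α n * α n := Nat.mul_comm _ _

lemma enc_odometer (hα : ∀ i, 2 ≤ α i) (m : ℕ) (x : ∀ i, Fin (α i)) :
    enc α m (odometer α x) = (enc α m x + 1) % Mp α m := by
  induction m with
  | zero => simp [enc, Mp]
  | succ n ih =>
    by_cases hC : ∀ j < n + 1, (x j : ℕ) + 1 = α j
    · -- full carry below n+1
      have hmax : enc α (n+1) x + 1 = Mp α (n+1) := (enc_max_iff hα (n+1) x).mpr hC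
      have hz : ∀ j < n + 1, (odometer α x j : ℕ) = 0 := by
        intro j hj
        have hCj : ∀ j' < j, (x j' : ℕ) + 1 = α j' := fun j' hj' => hC j' (hj'.trans hj)
        simp only [odometer, if_pos hCj]
        rw [hC j hj]
        exact Nat.mod_self _
      have : enc α (n+1) (odometer α x) = 0 := by
        apply Finset.sum_eq_zero
        intro i hi
        rw [hz i (Finset.mem_range.mp hi)]
        ring
      rw [this, hmax, Nat.mod_self]
    · -- no full carry: enc x (n+1) + 1 < Mp (n+1)
      have hlt : enc α (n+1) x < Mp α (n+1) := enc_lt hα (n+1) x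
      have hne : enc α (n+1) x + 1 ≠ Mp α (n+1) := fun h => hC ((enc_max_iff hα (n+1) x).mp h)
      have hlt' : enc α (n+1) x + 1 < Mp α (n+1) := lt_of_le_of_ne hlt hne
      rw [Nat.mod_eq_of_lt hlt']
      -- now show enc (odometer x) (n+1) = enc x (n+1) + 1 directly
      by_cases hCn : ∀ j < n, (x j : ℕ) + 1 = α j
      · -- all below n maximal, so x n + 1 < α n (else hC would hold)
        have hxn : (x n : ℕ) + 1 ≠ α n := by
          intro h
          exact hC (fun j hj => by
            rcases Nat.lt_succ_iff_lt_or_eq.mp hj with hj' | hj'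
            · exact hCn j hj'
            · subst hj'; exact h)
        have hxn' : (x n : ℕ) + 1 < α n := lt_of_le_of_ne (x n).2 hxn
        have hmaxn : enc α n x + 1 = Mp α n := (enc_max_iff hα n x).mpr hCn
        have hzn : ∀ j < n, (odometer α x j : ℕ) = 0 := by
          intro j hj
          have hCj : ∀ j' < j, (x j' : ℕ) + 1 = α j' := fun j' hj' => hCn j' (hj'.trans hj)
          simp only [odometer, if_pos hCj]
          rw [hCn j hj]; exact Nat.mod_self _
        have hzero : enc α n (odometer α x) = 0 :=
          Finset.sum_eq_zero (fun i hi => by rw [hzn i (Finset.mem_range.mp hi)]; ring)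
        have hon : (odometer α x n : ℕ) = (x n : ℕ) + 1 := by
          simp only [odometer, if_pos hCn]
          exact Nat.mod_eq_of_lt hxn'
        rw [enc_succ, enc_succ, hzero, hon]
        calc 0 + ((x n : ℕ) + 1) * Mp α n = (enc α n x + 1) + (x n : ℕ) * Mp α n := by
              rw [hmaxn]; ring
          _ = enc α n x + (x n : ℕ) * Mp α n + 1 := by ring
      · -- not all below n maximal
        have hlen : enc α n x < Mp α n := enc_lt hα n x
        have hnen : enc α n x + 1 ≠ Mp α n := fun h => hCn ((enc_max_iff hα n x).mp h)
        have hltn : enc α n x + 1 < Mp α n := lt_of_le_of_ne hlen hnen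
        have ihn : enc α n (odometer α x) = enc α n x + 1 := by
          rw [ih, Nat.mod_eq_of_lt hltn]
        have hon : (odometer α x n : ℕ) = (x n : ℕ) := by
          simp only [odometer, if_neg hCn]
        rw [enc_succ, enc_succ, ihn, hon]; ring

lemma enc_iterate (hα : ∀ i, 2 ≤ α i) (m k : ℕ) (x : ∀ i, Fin (α i)) :
    enc α m ((odometer α)^[k] x) = (enc α m x + k) % Mp α m := by
  induction k with
  | zero => simp [Nat.mod_eq_of_lt (enc_lt hα m x)]
  | succ n ih =>
    rw [Function.iterate_succ_apply', enc_odometer hα, ih, Nat.mod_add_mod, Nat.add_assoc]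

end OdoAux

namespace OdoAux2
open OdoAux
variable {α : ℕ → ℕ}

lemma Mp_dvd_aux (hα : ∀ i, 2 ≤ α i) {i s : ℕ} (h : i < s) :
    ∃ d, Mp α s = Mp α i * (α i * d) := by
  obtain ⟨t, ht⟩ : ∃ t, s = (i+1) + t := ⟨s - (i+1), by omega⟩
  subst ht
  refine ⟨∏ j ∈ Finset.range t, α (i+1+j), ?_⟩
  rw [show Mp α (i+1+t) = (∏ j ∈ Finset.range (i+1), α j) * ∏ j ∈ Finset.range t, α (i+1+j) from
    Finset.prod_range_add _ _ _]
  rw [show (∏ j ∈ Finset.range (i+1), α j) = Mp α (i+1) from rfl, Mp_succ, Nat.mul_assoc]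

/-- digits below `s` are unaffected by adding `Mp α s * z`. -/
lemma dig_add_mul (hα : ∀ i, 2 ≤ α i) {i s : ℕ} (h : i < s) (r z : ℕ) :
    dig α i (r + Mp α s * z) = dig α i r := by
  obtain ⟨d, hd⟩ := Mp_dvd_aux hα h
  unfold dig
  rw [hd, Nat.mul_assoc, Nat.add_mul_div_left _ _ (Mp_pos hα i), Nat.mul_assoc,
    Nat.add_mul_mod_self_left]

lemma dig_enc (hα : ∀ i, 2 ≤ α i) {i m : ℕ} (h : i < m) (x : ∀ i, Fin (α i)) :
    dig α i (enc α m x) = (x i : ℕ) := by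
  induction m with
  | zero => omega
  | succ n ih =>
    rw [enc_succ, Nat.mul_comm]
    rcases Nat.lt_succ_iff_lt_or_eq.mp h with h' | h'
    · rw [show Mp α n = Mp α n from rfl]
      rw [dig_add_mul hα h']
      exact ih h'
    · subst h'
      unfold dig
      rw [Nat.add_mul_div_left _ _ (Mp_pos hα i), Nat.div_eq_of_lt (enc_lt hα i x)]
      simp [Nat.mod_eq_of_lt (x i).2]

/-- digit expansion: every `e < Mp α m` is the sum of its digits. -/
lemma dig_expand (hα : ∀ i, 2 ≤ α i) (m : ℕ) : ∀ e, e < Mp α m →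
    ∑ i ∈ Finset.range m, dig α i e * Mp α i = e := by
  induction m with
  | zero =>
    intro e he
    have : e = 0 := by simpa [Mp] using he
    simp [this]
  | succ n ih =>
    intro e he
    rw [Finset.sum_range_succ]
    have hpos := Mp_pos hα n
    have hrec : ∀ i < n, dig α i e = dig α i (e % Mp α n) := by
      intro i hi
      conv_lhs => rw [show e = e % Mp α n + Mp α n * (e / Mp α n) from
        by rw [Nat.mod_add_div]]
      rw [dig_add_mul hα hi]
    have hsum : ∑ i ∈ Finset.range n, dig α i e * Mp α i = e % Mp α n := by
      rw [Finset.sum_congr rfl (fun i hi => by rw [hrec i (Finset.mem_range.mp hi)])]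
      exact ih _ (Nat.mod_lt _ hpos)
    have hdign : dig α n e = e / Mp α n := by
      unfold dig
      apply Nat.mod_eq_of_lt
      rw [Nat.div_lt_iff_lt_mul hpos]
      rw [Mp_succ] at he
      have := Nat.mul_comm (Mp α n) (α n)
      omega
    rw [hsum, hdign, Nat.mul_comm]
    exact Nat.mod_add_div _ _

lemma dig_lt (hα : ∀ i, 2 ≤ α i) (i e : ℕ) : dig α i e < α i :=
  Nat.mod_lt _ (by linarith [hα i])

/-- Fiber characterization: for `e < Mp α m`, `enc α m x = e` iff all digits agree. -/
lemma enc_eq_iff (hα : ∀ i, 2 ≤ α i) {m e : ℕ} (he : e < Mp α m) (x : ∀ i, Fin (α i)) :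
    enc α m x = e ↔ ∀ i < m, (x i : ℕ) = dig α i e := by
  constructor
  · intro h i hi
    rw [← h, dig_enc hα hi]
  · intro h
    unfold enc
    rw [Finset.sum_congr rfl (fun i hi => by rw [h i (Finset.mem_range.mp hi)])]
    exact dig_expand hα m e he

end OdoAux2

noncomputable section OdoInv

/-- The inverse odometer: "-1" with borrow. -/
def odoInv (α : ℕ → ℕ) (hα : ∀ i, 2 ≤ α i) (x : ∀ i, Fin (α i)) : ∀ i, Fin (α i) :=
  fun i =>
    if ∀ j < i, (x j : ℕ) = 0
    then ⟨((x i : ℕ) + (α i - 1)) % α i, Nat.mod_lt _ (by have := hα i; omega)⟩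
    else x i

variable {α : ℕ → ℕ} (hα : ∀ i, 2 ≤ α i)

lemma odoInv_odometer (x : ∀ i, Fin (α i)) : odoInv α hα (odometer α x) = x := by
  funext i
  have key : ∀ i : ℕ, (∀ j < i, (odometer α x j : ℕ) = 0) ↔ (∀ j < i, (x j : ℕ) + 1 = α j) := by
    intro i
    constructor
    · intro h j hj
      induction j using Nat.strong_induction_on with
      | _ j ihj =>
        have hCj : ∀ j' < j, (x j' : ℕ) + 1 = α j' := fun j' hj' => ihj j' hj' (hj'.trans hj)
        have := h j hj
        simp only [odometer, if_pos hCj] at this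
        have h2 : ((x j : ℕ) + 1) % α j = 0 := this
        have h3 : (x j : ℕ) + 1 ≤ α j := (x j).2
        rcases Nat.lt_or_ge ((x j : ℕ) + 1) (α j) with h4 | h4
        · rw [Nat.mod_eq_of_lt h4] at h2; omega
        · omega
    · intro h j hj
      have hCj : ∀ j' < j, (x j' : ℕ) + 1 = α j' := fun j' hj' => h j' (hj'.trans hj)
      simp only [odometer, if_pos hCj]
      rw [h j hj]
      exact Nat.mod_self _
  by_cases hc : ∀ j < i, (x j : ℕ) + 1 = α j
  · have hc' : ∀ j < i, (odometer α x j : ℕ) = 0 := (key i).mpr hc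
    simp only [odoInv]
    rw [if_pos hc']
    apply Fin.ext
    show ((odometer α x i : ℕ) + (α i - 1)) % α i = (x i : ℕ)
    simp only [odometer]
    rw [if_pos hc]
    show (((x i : ℕ) + 1) % α i + (α i - 1)) % α i = (x i : ℕ)
    have h2 : 2 ≤ α i := hα i
    rw [Nat.mod_add_mod, show (x i : ℕ) + 1 + (α i - 1) = (x i : ℕ) + α i by omega,
      Nat.add_mod_right]
    exact Nat.mod_eq_of_lt (x i).2
  · have hc' : ¬ ∀ j < i, (odometer α x j : ℕ) = 0 := fun h => hc ((key i).mp h)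
    simp only [odoInv]
    rw [if_neg hc']
    simp only [odometer]
    rw [if_neg hc]

lemma odometer_odoInv (x : ∀ i, Fin (α i)) : odometer α (odoInv α hα x) = x := by
  funext i
  have key : ∀ i : ℕ, (∀ j < i, (odoInv α hα x j : ℕ) + 1 = α j) ↔ (∀ j < i, (x j : ℕ) = 0) := by
    intro i
    constructor
    · intro h j hj
      induction j using Nat.strong_induction_on with
      | _ j ihj =>
        have hZj : ∀ j' < j, (x j' : ℕ) = 0 := fun j' hj' => ihj j' hj' (hj'.trans hj)
        have := h j hj
        simp only [odoInv, if_pos hZj] at this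
        have h2 : ((x j : ℕ) + (α j - 1)) % α j + 1 = α j := this
        have h3 : (x j : ℕ) < α j := (x j).2
        have h4 : 2 ≤ α j := hα j
        rcases Nat.eq_zero_or_pos (x j : ℕ) with h5 | h5
        · exact h5
        · exfalso
          have h6 : (x j : ℕ) + (α j - 1) = ((x j : ℕ) - 1) + α j := by omega
          rw [h6, Nat.add_mod_right, Nat.mod_eq_of_lt (by omega)] at h2
          omega
    · intro h j hj
      have hZj : ∀ j' < j, (x j' : ℕ) = 0 := fun j' hj' => h j' (hj'.trans hj)
      simp only [odoInv, if_pos hZj]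
      rw [h j hj]
      show (0 + (α j - 1)) % α j + 1 = α j
      have h4 : 2 ≤ α j := hα j
      rw [Nat.zero_add, Nat.mod_eq_of_lt (by omega)]
      omega
  by_cases hc : ∀ j < i, (x j : ℕ) = 0
  · have hc' : ∀ j < i, (odoInv α hα x j : ℕ) + 1 = α j := (key i).mpr hc
    simp only [odometer]
    rw [if_pos hc']
    apply Fin.ext
    show ((odoInv α hα x i : ℕ) + 1) % α i = (x i : ℕ)
    simp only [odoInv]
    rw [if_pos hc]
    show (((x i : ℕ) + (α i - 1)) % α i + 1) % α i = (x i : ℕ)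
    have h2 : 2 ≤ α i := hα i
    rw [Nat.mod_add_mod, show (x i : ℕ) + (α i - 1) + 1 = (x i : ℕ) + α i by omega,
      Nat.add_mod_right]
    exact Nat.mod_eq_of_lt (x i).2
  · have hc' : ¬ ∀ j < i, (odoInv α hα x j : ℕ) + 1 = α j := fun h => hc ((key i).mp h)
    simp only [odometer]
    rw [if_neg hc']
    simp only [odoInv]
    rw [if_neg hc]

lemma odoInv_iterate_odometer (k : ℕ) (x : ∀ i, Fin (α i)) :
    (odoInv α hα)^[k] ((odometer α)^[k] x) = x := by
  have : Function.LeftInverse (odoInv α hα) (odometer α) := odoInv_odometer hα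
  exact this.iterate k x

lemma measurable_odoInv : Measurable (odoInv α hα) := by
  apply measurable_pi_lambda
  intro i
  have hs : MeasurableSet {x : ∀ i, Fin (α i) | ∀ j < i, (x j : ℕ) = 0} := by
    have he : {x : ∀ i, Fin (α i) | ∀ j < i, (x j : ℕ) = 0}
        = ⋂ j ∈ Finset.range i, (fun x : ∀ i, Fin (α i) => x j) ⁻¹' {y : Fin (α j) | (y : ℕ) = 0} := by
      ext x; simp [Finset.mem_range]
    rw [he]
    exact MeasurableSet.biInter (Set.to_countable _)
      fun j _ => (measurable_pi_apply j) (MeasurableSpace.measurableSet_top)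
  exact Measurable.ite hs
    (Measurable.comp
      (g := fun y : Fin (α i) =>
        (⟨((y : ℕ) + (α i - 1)) % α i, Nat.mod_lt _ (by have := hα i; omega)⟩ : Fin (α i)))
      measurable_from_top (measurable_pi_apply i))
    (measurable_pi_apply i)

end OdoInv

namespace OdoNu
open OdoAux OdoAux2 Finset

variable (α : ℕ → ℕ) (hα : ∀ i, 2 ≤ α i) (w : ∀ i, Fin (α i) → NNReal)

def W (i n : ℕ) : ℝ≥0 := w i ⟨n % α i, Nat.mod_lt _ (by have := hα i; omega)⟩

def nu (m e : ℕ) : ℝ≥0 := ∏ i ∈ Finset.range m, W α hα w i (e / Mp α i)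

def tau (s z : ℕ) : ℝ≥0 := W α hα w s z * W α hα w (s+1) (z / α s)

variable {α w}

lemma W_congr {i a b : ℕ} (h : a % α i = b % α i) : W α hα w i a = W α hα w i b :=
  congrArg (w i) (Fin.ext h)

lemma W_sum (hw_sum : ∀ i, ∑ j, w i j = 1) (i : ℕ) :
    ∑ n ∈ Finset.range (α i), W α hα w i n = 1 := by
  rw [← Fin.sum_univ_eq_sum_range (fun n => W α hα w i n) (α i), ← hw_sum i]
  apply Finset.sum_congr rfl
  intro j _
  show w i ⟨(j : ℕ) % α i, _⟩ = w i j
  congr 1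
  exact Fin.ext (Nat.mod_eq_of_lt j.isLt)

lemma W_le_one (hw_sum : ∀ i, ∑ j, w i j = 1) (i n : ℕ) : W α hα w i n ≤ 1 := by
  rw [← hw_sum i]
  exact Finset.single_le_sum (f := fun j => w i j) (fun _ _ => zero_le) (Finset.mem_univ _)

lemma sum_range_mul {M : Type*} [AddCommMonoid M] (f : ℕ → M) (a b : ℕ) :
    ∑ e ∈ Finset.range (a * b), f e = ∑ z ∈ Finset.range b, ∑ r ∈ Finset.range a, f (r + a * z) := by
  induction b with
  | zero => simp
  | succ n ih =>
    rw [Nat.mul_succ, Finset.sum_range_add, ih, Finset.sum_range_succ]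
    congr 1
    apply Finset.sum_congr rfl
    intro r _
    rw [Nat.add_comm]

lemma sum_range_mul' {M : Type*} [AddCommMonoid M] (f : ℕ → M) {a b n : ℕ} (h : n = a * b) :
    ∑ e ∈ Finset.range n, f e
      = ∑ r ∈ Finset.range a, ∑ z ∈ Finset.range b, f (r + a * z) := by
  rw [h, sum_range_mul]
  exact Finset.sum_comm

lemma sum_shift {M : Type*} [AddCommMonoid M] (f : ℕ → M) (n c : ℕ) (hn : 0 < n) :
    ∑ r ∈ Finset.range n, f ((r + c) % n) = ∑ r ∈ Finset.range n, f r := by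
  have hcd := Nat.mod_add_div c n
  have hlt := Nat.mod_lt c hn
  apply Finset.sum_nbij' (i := fun r => (r + c) % n) (j := fun r => (r + (n - c % n)) % n)
  · intro a ha; exact Finset.mem_range.mpr (Nat.mod_lt _ hn)
  · intro a ha; exact Finset.mem_range.mpr (Nat.mod_lt _ hn)
  · intro a ha
    have haa := Finset.mem_range.mp ha
    rw [Nat.mod_add_mod]
    rw [show a + c + (n - c % n) = a + n * (c / n) + n by omega]
    rw [Nat.add_mod_right, Nat.add_mul_mod_self_left, Nat.mod_eq_of_lt haa]
  · intro a ha
    have haa := Finset.mem_range.mp ha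
    rw [Nat.mod_add_mod]
    rw [show a + (n - c % n) + c = a + n * (c / n) + n by omega]
    rw [Nat.add_mod_right, Nat.add_mul_mod_self_left, Nat.mod_eq_of_lt haa]
  · intro a ha; rfl

lemma nu_split1 (hw : True) {s r : ℕ} (z : ℕ) (hr : r < Mp α s) :
    nu α hα w (s+1) (r + Mp α s * z) = nu α hα w s r * W α hα w s z := by
  unfold nu
  rw [Finset.prod_range_succ]
  congr 1
  · apply Finset.prod_congr rfl
    intro i hi
    have hi' := Finset.mem_range.mp hi
    have hd := dig_add_mul hα hi' r z
    unfold dig at hd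
    exact W_congr hα hd
  · apply W_congr hα
    rw [Nat.add_mul_div_left _ _ (Mp_pos hα s), Nat.div_eq_of_lt hr, Nat.zero_add]

lemma nu_split2 {s r : ℕ} (z : ℕ) (hr : r < Mp α s) :
    nu α hα w (s+2) (r + Mp α s * z) = nu α hα w s r * tau α hα w s z := by
  unfold nu tau
  rw [Finset.prod_range_succ, Finset.prod_range_succ, ← mul_assoc]
  congr 1
  congr 1
  · apply Finset.prod_congr rfl
    intro i hi
    have hi' := Finset.mem_range.mp hi
    have hd := dig_add_mul hα hi' r z
    unfold dig at hd
    exact W_congr hα hd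
  · apply W_congr hα
    rw [Nat.add_mul_div_left _ _ (Mp_pos hα s), Nat.div_eq_of_lt hr, Nat.zero_add]
  · apply W_congr hα
    rw [show Mp α (s+1) = Mp α s * α s from Mp_succ s, ← Nat.div_div_eq_div_mul,
      Nat.add_mul_div_left _ _ (Mp_pos hα s), Nat.div_eq_of_lt hr, Nat.zero_add]

lemma nu_sum (hw_sum : ∀ i, ∑ j, w i j = 1) (s : ℕ) :
    ∑ e ∈ Finset.range (Mp α s), nu α hα w s e = 1 := by
  induction s with
  | zero => simp [nu, Mp]
  | succ n ih =>
    rw [Mp_succ, sum_range_mul]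
    have : ∀ z ∈ Finset.range (α n),
        ∑ r ∈ Finset.range (Mp α n), nu α hα w (n+1) (r + Mp α n * z)
          = W α hα w n z := by
      intro z _
      rw [Finset.sum_congr rfl (fun r hr =>
        nu_split1 hα trivial z (Finset.mem_range.mp hr))]
      rw [← Finset.sum_mul, ih, one_mul]
    rw [Finset.sum_congr rfl this]
    exact W_sum hα hw_sum n

lemma tau_sum (hw_sum : ∀ i, ∑ j, w i j = 1) (s : ℕ) :
    ∑ z ∈ Finset.range (α s * α (s+1)), tau α hα w s z = 1 := by
  rw [sum_range_mul]
  have : ∀ v ∈ Finset.range (α (s+1)),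
      ∑ j ∈ Finset.range (α s), tau α hα w s (j + α s * v)
        = W α hα w (s+1) v := by
    intro v _
    have : ∀ j ∈ Finset.range (α s),
        tau α hα w s (j + α s * v) = W α hα w s j * W α hα w (s+1) v := by
      intro j hj
      have hj' := Finset.mem_range.mp hj
      unfold tau
      congr 1
      · exact W_congr hα (Nat.add_mul_mod_self_left _ _ _)
      · apply W_congr hα
        rw [Nat.add_mul_div_left _ _ (by have := hα s; omega : 0 < α s),
          Nat.div_eq_of_lt hj', Nat.zero_add]
    rw [Finset.sum_congr rfl this, ← Finset.sum_mul, W_sum hα hw_sum, one_mul]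
  rw [Finset.sum_congr rfl this]
  exact W_sum hα hw_sum (s+1)

lemma min_mul_le (a b c d : ℝ≥0) : min (a * b) (c * d) ≤ (a + c) * min b d := by
  rcases le_total b d with h | h
  · rw [min_eq_left h]
    calc min (a*b) (c*d) ≤ a * b := min_le_left _ _
      _ ≤ (a + c) * b := by
        apply mul_le_mul_left (le_add_right le_rfl)
  · rw [min_eq_right h]
    calc min (a*b) (c*d) ≤ c * d := min_le_right _ _
      _ ≤ (a + c) * d := by
        apply mul_le_mul_left (le_add_left le_rfl)

lemma mod_PQ {P Q a y : ℕ} (hP : 0 < P) (hQ : 0 < Q) (ha : a < P) :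
    (a + P * y) % (P * Q) = a + P * (y % Q) := by
  conv_lhs => rw [show y = y % Q + Q * (y / Q) from (Nat.mod_add_div _ _).symm]
  rw [Nat.mul_add, ← Nat.add_assoc, ← Nat.mul_assoc, Nat.add_mul_mod_self_left]
  apply Nat.mod_eq_of_lt
  have h1 : y % Q < Q := Nat.mod_lt _ hQ
  have h2 : P * (y % Q) ≤ P * (Q - 1) := Nat.mul_le_mul_left P (by omega)
  have h3 : P * (Q - 1) + P = P * Q := by
    rcases Q with _ | q
    · omega
    · rw [Nat.succ_sub_one, Nat.mul_succ]
  omega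


section Overlap
open OdoAux OdoAux2 Finset

variable {α : ℕ → ℕ} {w : ∀ i, Fin (α i) → NNReal}

/-- Decomposition of subtraction-with-borrow in the mixed-radix system. -/
lemma sigma_decomp (hα : ∀ i, 2 ≤ α i) {s k : ℕ} (hk1 : Mp α s ≤ k) (hk2 : k < Mp α (s+1))
    {r : ℕ} (z : ℕ) (hr : r < Mp α s) :
    ((r + Mp α s * z) + (Mp α (s+2) - k)) % Mp α (s+2)
      = (r + (Mp α s - k % Mp α s)) % Mp α s
        + Mp α s * ((z + (α s * α (s+1)
            - (k / Mp α s + 1 - (r + (Mp α s - k % Mp α s)) / Mp α s)))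
          % (α s * α (s+1))) := by
  have hP : 0 < Mp α s := Mp_pos hα s
  have hQ : 0 < α s * α (s+1) := Nat.mul_pos (by have := hα s; omega) (by have := hα (s+1); omega)
  have hM : Mp α (s+2) = Mp α s * (α s * α (s+1)) := by
    rw [Mp_succ, Mp_succ, Nat.mul_assoc]
  obtain ⟨P, hPd⟩ : ∃ x, x = Mp α s := ⟨_, rfl⟩
  obtain ⟨Q, hQd⟩ : ∃ x, x = α s * α (s+1) := ⟨_, rfl⟩
  obtain ⟨κ, hκd⟩ : ∃ x, x = k % Mp α s := ⟨_, rfl⟩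
  obtain ⟨t₀, ht₀d⟩ : ∃ x, x = k / Mp α s := ⟨_, rfl⟩
  have hκP : κ < P := by rw [hκd, hPd]; exact Nat.mod_lt _ hP
  have hmd : κ + P * t₀ = k := by rw [hκd, ht₀d, hPd]; exact Nat.mod_add_div k (Mp α s)
  have ht₀1 : 1 ≤ t₀ := by rw [ht₀d]; exact (Nat.one_le_div_iff hP).mpr hk1
  have ht₀2 : t₀ < α s := by
    rw [ht₀d, Nat.div_lt_iff_lt_mul hP]
    rw [Mp_succ] at hk2
    calc k < Mp α s * α s := hk2
      _ = α s * Mp α s := Nat.mul_comm _ _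
  have hαsQ : α s < Q := by
    rw [hQd]
    have h1 := Nat.mul_le_mul_left (α s) (hα (s+1))
    have := hα s
    omega
  obtain ⟨A, hAd⟩ : ∃ x, x = r + (P - κ) := ⟨_, rfl⟩
  obtain ⟨r', hr'd⟩ : ∃ x, x = A % P := ⟨_, rfl⟩
  obtain ⟨c, hcd⟩ : ∃ x, x = A / P := ⟨_, rfl⟩
  have hPp : 0 < P := hPd ▸ hP
  have hQp : 0 < Q := hQd ▸ hQ
  have hAe : r' + P * c = A := by rw [hr'd, hcd]; exact Nat.mod_add_div A P
  have hr'P : r' < P := by rw [hr'd]; exact Nat.mod_lt _ hPp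
  have hc1 : c ≤ 1 := by
    have hA2 : A < 2 * P := by
      have : P - κ ≤ P := Nat.sub_le _ _
      omega
    have := (Nat.div_lt_iff_lt_mul hPp).mpr hA2
    omega
  obtain ⟨u, hud⟩ : ∃ x, x = t₀ + 1 - c := ⟨_, rfl⟩
  have hu1 : 1 ≤ u := by omega
  have ht₀Q : t₀ + 1 ≤ Q := by omega
  have huQ : u < Q := by omega
  have hkM : k ≤ P * Q := by
    rw [hPd, hQd, ← hM]
    exact le_of_lt (lt_of_lt_of_le hk2 (Mp_le hα (by omega)))
  -- fold the goal notation
  rw [← hPd, ← hQd] at hM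
  rw [hM, ← hκd, ← ht₀d, ← hPd, ← hQd, ← hAd, ← hr'd, ← hcd, ← hud]
  -- step 1 : arithmetic identity
  have E0 : (r + P * z) + (P * Q - k) = A + P * (z + (Q - (t₀ + 1))) := by
    have hκ' : κ ≤ P := le_of_lt hκP
    zify [hkM, hκ', ht₀Q, hAd]
    have hmd' : (κ : ℤ) + P * t₀ = k := by exact_mod_cast hmd
    ring_nf
    linarith [hmd']
  have E1 : A + P * (z + (Q - (t₀ + 1))) = r' + P * (z + (Q - u)) := by
    rw [← hAe]
    have h3 : c + (z + (Q - (t₀ + 1))) = z + (Q - u) := by omega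
    calc r' + P * c + P * (z + (Q - (t₀+1)))
        = r' + P * (c + (z + (Q - (t₀+1)))) := by ring
      _ = r' + P * (z + (Q - u)) := by rw [h3]
  rw [E0, E1, mod_PQ hPp hQp hr'P]

/-- The τ-overlap estimate. -/
lemma tau_overlap (hα : ∀ i, 2 ≤ α i) (hw_sum : ∀ i, ∑ j, w i j = 1) {s : ℕ}
    {bs bs' : ℕ} (hbs : bs < α s) (hbs' : bs' < α (s+1))
    {δ : ℝ≥0} (hδs : 1 ≤ W α hα w s bs + δ) (hδs' : 1 ≤ W α hα w (s+1) bs' + δ)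
    {u : ℕ} (hu1 : 1 ≤ u) (huQ : u < α s * α (s+1)) :
    ∑ z ∈ Finset.range (α s * α (s+1)),
      min (tau α hα w s z) (tau α hα w s ((z + (α s * α (s+1) - u)) % (α s * α (s+1))))
      ≤ 4 * δ := by
  have hQ : 0 < α s * α (s+1) :=
    Nat.mul_pos (by have := hα s; omega) (by have := hα (s+1); omega)
  set Q := α s * α (s+1) with hQdef
  set zstar := bs + α s * bs' with hzdef
  have hzQ : zstar < Q := by
    have h1 : 0 < α s := by have := hα s; omega
    have h4 := Nat.mul_le_mul_left (α s) (by omega : bs' ≤ α (s+1) - 1)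
    have h3 : α s * (α (s+1) - 1) + α s = α s * α (s+1) := by
      rcases h5 : (α (s+1)) with _ | q
      · have := hα (s+1); omega
      · rw [Nat.succ_sub_one, Nat.mul_succ]
    have : zstar = bs + α s * bs' := hzdef
    omega
  have htz : tau α hα w s zstar = W α hα w s bs * W α hα w (s+1) bs' := by
    unfold tau
    congr 1
    · exact W_congr hα (Nat.add_mul_mod_self_left _ _ _)
    · apply W_congr hα
      rw [Nat.add_mul_div_left _ _ (by have := hα s; omega : 0 < α s),
        Nat.div_eq_of_lt hbs, Nat.zero_add]
  have hWle : W α hα w s bs ≤ 1 := W_le_one hα hw_sum s bs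
  have h2δ : 1 ≤ tau α hα w s zstar + 2 * δ := by
    rw [htz]
    have step1 : W α hα w s bs ≤ W α hα w s bs * W α hα w (s+1) bs' + δ := by
      calc W α hα w s bs = W α hα w s bs * 1 := (mul_one _).symm
        _ ≤ W α hα w s bs * (W α hα w (s+1) bs' + δ) := mul_le_mul_right hδs' _
        _ = W α hα w s bs * W α hα w (s+1) bs' + W α hα w s bs * δ := mul_add _ _ _
        _ ≤ W α hα w s bs * W α hα w (s+1) bs' + 1 * δ :=
            add_le_add_right (mul_le_mul_left hWle δ) _
        _ = W α hα w s bs * W α hα w (s+1) bs' + δ := by rw [one_mul]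
    calc (1 : ℝ≥0) ≤ W α hα w s bs + δ := hδs
      _ ≤ (W α hα w s bs * W α hα w (s+1) bs' + δ) + δ := add_le_add_left step1 δ
      _ = W α hα w s bs * W α hα w (s+1) bs' + 2 * δ := by ring
  set g : ℕ → ℕ := fun z => (z + (Q - u)) % Q with hgdef
  have hgne : g zstar ≠ zstar := by
    intro h
    have ha1 : 1 ≤ Q - u := by omega
    have ha2 : Q - u < Q := by omega
    rcases Nat.lt_or_ge (zstar + (Q - u)) Q with h4 | h4
    · rw [hgdef] at h; simp only at h
      rw [Nat.mod_eq_of_lt h4] at h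
      omega
    · rw [hgdef] at h; simp only at h
      rw [Nat.mod_eq_sub_mod h4, Nat.mod_eq_of_lt (by omega)] at h
      omega
  have hgQ : g zstar < Q := Nat.mod_lt _ hQ
  have htsum := tau_sum hα hw_sum s
  rw [← hQdef] at htsum
  have hpair : tau α hα w s (g zstar) + tau α hα w s zstar ≤ 1 := by
    rw [← htsum, ← Finset.sum_pair hgne]
    apply Finset.sum_le_sum_of_subset
    intro x hx
    rcases Finset.mem_insert.mp hx with h | h
    · exact Finset.mem_range.mpr (h ▸ hgQ)
    · exact Finset.mem_range.mpr ((Finset.mem_singleton.mp h) ▸ hzQ)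
  have hgz : tau α hα w s (g zstar) ≤ 2 * δ := by
    rw [add_comm] at h2δ
    have h5 := hpair.trans h2δ
    exact le_of_add_le_add_right h5
  have herase : ∑ z ∈ (Finset.range Q).erase zstar, tau α hα w s z ≤ 2 * δ := by
    have he : tau α hα w s zstar + ∑ z ∈ (Finset.range Q).erase zstar, tau α hα w s z = 1 := by
      rw [Finset.add_sum_erase _ _ (Finset.mem_range.mpr hzQ)]
      exact htsum
    have h6 : tau α hα w s zstar + ∑ z ∈ (Finset.range Q).erase zstar, tau α hα w s z
        ≤ tau α hα w s zstar + 2 * δ := he ▸ h2δ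
    exact le_of_add_le_add_left h6
  calc ∑ z ∈ Finset.range Q, min (tau α hα w s z) (tau α hα w s (g z))
      = min (tau α hα w s zstar) (tau α hα w s (g zstar))
        + ∑ z ∈ (Finset.range Q).erase zstar, min (tau α hα w s z) (tau α hα w s (g z)) :=
        (Finset.add_sum_erase _ _ (Finset.mem_range.mpr hzQ)).symm
    _ ≤ tau α hα w s (g zstar) + ∑ z ∈ (Finset.range Q).erase zstar, tau α hα w s z := by
        apply add_le_add (min_le_right _ _)
        exact Finset.sum_le_sum (fun z _ => min_le_left _ _)
    _ ≤ 2 * δ + 2 * δ := add_le_add hgz herase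
    _ = 4 * δ := by ring

/-- The main combinatorial overlap bound. -/
theorem overlap_bound (hα : ∀ i, 2 ≤ α i) (hw_sum : ∀ i, ∑ j, w i j = 1) {s k : ℕ}
    (hk1 : Mp α s ≤ k) (hk2 : k < Mp α (s+1))
    {bs bs' : ℕ} (hbs : bs < α s) (hbs' : bs' < α (s+1))
    {δ : ℝ≥0} (hδs : 1 ≤ W α hα w s bs + δ) (hδs' : 1 ≤ W α hα w (s+1) bs' + δ) :
    ∑ e ∈ Finset.range (Mp α (s+2)),
      min (nu α hα w (s+2) e)
          (nu α hα w (s+2) ((e + (Mp α (s+2) - k)) % Mp α (s+2)))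
      ≤ 8 * δ := by
  have hP : 0 < Mp α s := Mp_pos hα s
  have hQ : 0 < α s * α (s+1) :=
    Nat.mul_pos (by have := hα s; omega) (by have := hα (s+1); omega)
  have hM : Mp α (s+2) = Mp α s * (α s * α (s+1)) := by
    rw [Mp_succ, Mp_succ, Nat.mul_assoc]
  have ht₀1 : 1 ≤ k / Mp α s := (Nat.one_le_div_iff hP).mpr hk1
  have ht₀2 : k / Mp α s < α s := by
    rw [Nat.div_lt_iff_lt_mul hP]
    rw [Mp_succ] at hk2
    calc k < Mp α s * α s := hk2
      _ = α s * Mp α s := Nat.mul_comm _ _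
  have hαsQ : α s < α s * α (s+1) := by
    have h1 := Nat.mul_le_mul_left (α s) (hα (s+1))
    have := hα s
    omega
  rw [sum_range_mul' _ hM]
  have inner : ∀ r ∈ Finset.range (Mp α s),
      ∑ z ∈ Finset.range (α s * α (s+1)),
          min (nu α hα w (s+2) (r + Mp α s * z))
              (nu α hα w (s+2) (((r + Mp α s * z) + (Mp α (s+2) - k)) % Mp α (s+2)))
      ≤ (nu α hα w s r + nu α hα w s ((r + (Mp α s - k % Mp α s)) % Mp α s)) * (4 * δ) := by
    intro r hrm
    have hr : r < Mp α s := Finset.mem_range.mp hrm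
    have hr'P : (r + (Mp α s - k % Mp α s)) % Mp α s < Mp α s := Nat.mod_lt _ hP
    have hc1 : (r + (Mp α s - k % Mp α s)) / Mp α s ≤ 1 := by
      have hA2 : r + (Mp α s - k % Mp α s) < 2 * Mp α s := by
        have : Mp α s - k % Mp α s ≤ Mp α s := Nat.sub_le _ _
        omega
      have := (Nat.div_lt_iff_lt_mul hP).mpr hA2
      omega
    have hu1 : 1 ≤ k / Mp α s + 1 - (r + (Mp α s - k % Mp α s)) / Mp α s := by omega
    have huQ : k / Mp α s + 1 - (r + (Mp α s - k % Mp α s)) / Mp α s < α s * α (s+1) := by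
      have h7 : k / Mp α s + 1 - (r + (Mp α s - k % Mp α s)) / Mp α s ≤ k / Mp α s + 1 :=
        Nat.sub_le _ _
      omega
    have hdec : ∀ z : ℕ, ((r + Mp α s * z) + (Mp α (s+2) - k)) % Mp α (s+2)
        = (r + (Mp α s - k % Mp α s)) % Mp α s
          + Mp α s * ((z + (α s * α (s+1)
              - (k / Mp α s + 1 - (r + (Mp α s - k % Mp α s)) / Mp α s)))
            % (α s * α (s+1))) := fun z => sigma_decomp hα hk1 hk2 z hr
    calc ∑ z ∈ Finset.range (α s * α (s+1)),
          min (nu α hα w (s+2) (r + Mp α s * z))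
              (nu α hα w (s+2) (((r + Mp α s * z) + (Mp α (s+2) - k)) % Mp α (s+2)))
        = ∑ z ∈ Finset.range (α s * α (s+1)),
            min (nu α hα w s r * tau α hα w s z)
                (nu α hα w s ((r + (Mp α s - k % Mp α s)) % Mp α s)
                  * tau α hα w s ((z + (α s * α (s+1)
                      - (k / Mp α s + 1 - (r + (Mp α s - k % Mp α s)) / Mp α s)))
                    % (α s * α (s+1)))) := by
          apply Finset.sum_congr rfl
          intro z _
          rw [hdec z, nu_split2 hα z hr, nu_split2 hα _ hr'P]
      _ ≤ ∑ z ∈ Finset.range (α s * α (s+1)),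
            (nu α hα w s r + nu α hα w s ((r + (Mp α s - k % Mp α s)) % Mp α s))
              * min (tau α hα w s z)
                  (tau α hα w s ((z + (α s * α (s+1)
                      - (k / Mp α s + 1 - (r + (Mp α s - k % Mp α s)) / Mp α s)))
                    % (α s * α (s+1)))) :=
          Finset.sum_le_sum (fun z _ => min_mul_le _ _ _ _)
      _ = (nu α hα w s r + nu α hα w s ((r + (Mp α s - k % Mp α s)) % Mp α s))
            * ∑ z ∈ Finset.range (α s * α (s+1)),
                min (tau α hα w s z)
                  (tau α hα w s ((z + (α s * α (s+1)
                      - (k / Mp α s + 1 - (r + (Mp α s - k % Mp α s)) / Mp α s)))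
                    % (α s * α (s+1)))) := by
          rw [Finset.mul_sum]
      _ ≤ (nu α hα w s r + nu α hα w s ((r + (Mp α s - k % Mp α s)) % Mp α s)) * (4 * δ) :=
          mul_le_mul_right (tau_overlap hα hw_sum hbs hbs' hδs hδs' hu1 huQ) _
  calc ∑ r ∈ Finset.range (Mp α s), ∑ z ∈ Finset.range (α s * α (s+1)),
          min (nu α hα w (s+2) (r + Mp α s * z))
              (nu α hα w (s+2) (((r + Mp α s * z) + (Mp α (s+2) - k)) % Mp α (s+2)))
      ≤ ∑ r ∈ Finset.range (Mp α s),
          (nu α hα w s r + nu α hα w s ((r + (Mp α s - k % Mp α s)) % Mp α s)) * (4 * δ) :=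
        Finset.sum_le_sum inner
    _ = (∑ r ∈ Finset.range (Mp α s),
          (nu α hα w s r + nu α hα w s ((r + (Mp α s - k % Mp α s)) % Mp α s))) * (4 * δ) := by
        rw [Finset.sum_mul]
    _ = (1 + 1) * (4 * δ) := by
        rw [Finset.sum_add_distrib, nu_sum hα hw_sum, sum_shift _ _ _ hP, nu_sum hα hw_sum]
    _ = 8 * δ := by ring

end Overlap
end OdoNu

section Meas
open OdoAux OdoAux2 OdoNu Finset

variable {α : ℕ → ℕ} {w : ∀ i, Fin (α i) → NNReal} {μ : Measure (∀ i, Fin (α i))}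

lemma measurableSet_cyl {m : ℕ} (a : ∀ i : Fin m, Fin (α i.1)) :
    MeasurableSet {x : ∀ i, Fin (α i) | ∀ i : Fin m, x i.1 = a i} := by
  have he : {x : ∀ i, Fin (α i) | ∀ i : Fin m, x i.1 = a i}
      = ⋂ i : Fin m, (fun x : ∀ i, Fin (α i) => x i.1) ⁻¹' {a i} := by
    ext x; simp
  rw [he]
  exact MeasurableSet.iInter fun i =>
    (measurable_pi_apply _) (MeasurableSpace.measurableSet_top)

lemma fiber_eq_cyl (hα : ∀ i, 2 ≤ α i) {m e : ℕ} (he : e < Mp α m) :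
    {x : ∀ i, Fin (α i) | enc α m x = e}
      = {x : ∀ i, Fin (α i) | ∀ i : Fin m, x i.1 = ⟨dig α i.1 e, dig_lt hα _ _⟩} := by
  ext x
  simp only [Set.mem_setOf_eq]
  rw [enc_eq_iff hα he x]
  constructor
  · intro h i; exact Fin.ext (h i.1 i.2)
  · intro h i hi; exact congrArg Fin.val (h ⟨i, hi⟩)

lemma measurableSet_fiber (hα : ∀ i, 2 ≤ α i) (m e : ℕ) :
    MeasurableSet {x : ∀ i, Fin (α i) | enc α m x = e} := by
  rcases Nat.lt_or_ge e (Mp α m) with he | he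
  · rw [fiber_eq_cyl hα he]
    exact measurableSet_cyl _
  · have : {x : ∀ i, Fin (α i) | enc α m x = e} = ∅ := by
      ext x
      simp only [Set.mem_setOf_eq, Set.mem_empty_iff_false, iff_false]
      intro h
      have := enc_lt hα m x
      omega
    rw [this]
    exact MeasurableSet.empty

lemma measure_fiber (hα : ∀ i, 2 ≤ α i) (hμ : IsProductMeasure α w μ) {m e : ℕ}
    (he : e < Mp α m) :
    μ {x | enc α m x = e} = (nu α hα w m e : ℝ≥0∞) := by
  rw [fiber_eq_cyl hα he, hμ m (fun i => ⟨dig α i.1 e, dig_lt hα _ _⟩)]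
  have h1 : (nu α hα w m e : ℝ≥0∞)
      = ∏ i ∈ Finset.range m, (W α hα w i (e / Mp α i) : ℝ≥0∞) := by
    rw [nu, ENNReal.coe_finset_prod]
  rw [h1, ← Fin.prod_univ_eq_prod_range (fun i => (W α hα w i (e / Mp α i) : ℝ≥0∞)) m]
  rfl

lemma measurableSet_encMem (hα : ∀ i, 2 ≤ α i) (m : ℕ) (G : Finset ℕ) :
    MeasurableSet {x : ∀ i, Fin (α i) | enc α m x ∈ G} := by
  have hset : {x : ∀ i, Fin (α i) | enc α m x ∈ G}
      = ⋃ e ∈ G, {x : ∀ i, Fin (α i) | enc α m x = e} := by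
    ext x; simp
  rw [hset]
  exact MeasurableSet.biUnion (Set.to_countable _) (fun e _ => measurableSet_fiber hα m e)

lemma measure_encMem (hα : ∀ i, 2 ≤ α i) (hμ : IsProductMeasure α w μ) {m : ℕ}
    (G : Finset ℕ) (hG : ∀ e ∈ G, e < Mp α m) :
    μ {x | enc α m x ∈ G} = ((∑ e ∈ G, nu α hα w m e : ℝ≥0) : ℝ≥0∞) := by
  have hset : {x : ∀ i, Fin (α i) | enc α m x ∈ G}
      = ⋃ e ∈ G, {x : ∀ i, Fin (α i) | enc α m x = e} := by
    ext x; simp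
  rw [hset, measure_biUnion_finset ?disj (fun e _ => measurableSet_fiber hα m e)]
  case disj =>
    intro e he e' he' hne
    apply Set.disjoint_left.mpr
    intro x hx hx'
    exact hne (by rw [← hx, ← hx'])
  rw [ENNReal.coe_finset_sum]
  exact Finset.sum_congr rfl (fun e he => measure_fiber hα hμ (hG e he))

lemma isProbability (hμ : IsProductMeasure α w μ) : IsProbabilityMeasure μ := by
  constructor
  have h0 := hμ 0 (fun i => i.elim0)
  have hs : {x : ∀ i, Fin (α i) | ∀ i : Fin 0, x i.1 = i.elim0} = Set.univ := by
    ext x; simp [Fin.forall_fin_zero_pi]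
  rw [hs] at h0
  rw [h0]
  simp

end Meas

section LpHelp

lemma null_preimage {X : Type*} [MeasurableSpace X] {μ : Measure X} {g : X → X}
    (hstar : CondStar μ g) {N : Set X} (hN : μ N = 0) : μ (g ⁻¹' N) = 0 := by
  obtain ⟨c, hc, hB⟩ := hstar
  have h1 : μ (toMeasurable μ N) = 0 := by rwa [measure_toMeasurable]
  have h2 := hB (toMeasurable μ N) (measurableSet_toMeasurable μ N)
  rw [h1, le_zero_iff, mul_eq_zero] at h2
  have h3 : μ (g ⁻¹' toMeasurable μ N) = 0 := by
    rcases h2 with h | h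
    · exact absurd h (ENNReal.ofReal_pos.mpr hc).ne'
    · exact h
  exact measure_mono_null (Set.preimage_mono (subset_toMeasurable μ N)) h3

lemma ae_comp {X : Type*} [MeasurableSpace X] {μ : Measure X} {g : X → X}
    (hstar : CondStar μ g) {f1 f2 : X → ℝ} (h : f1 =ᵐ[μ] f2) : f1 ∘ g =ᵐ[μ] f2 ∘ g := by
  have hN : μ {y | ¬ f1 y = f2 y} = 0 := MeasureTheory.ae_iff.mp h
  have hsub : {x | ¬ (f1 ∘ g) x = (f2 ∘ g) x} ⊆ g ⁻¹' {y | ¬ f1 y = f2 y} := fun x hx => hx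
  exact MeasureTheory.ae_iff.mpr (measure_mono_null hsub (null_preimage hstar hN))

end LpHelp

section Helpers2
open OdoAux OdoAux2 OdoNu

variable {α : ℕ → ℕ} {w : ∀ i, Fin (α i) → NNReal}

lemma T_iterate {μ : Measure (∀ i, Fin (α i))} {p : ENNReal} [Fact (1 ≤ p)]
    (hstar : CondStar μ (odometer α)) (T : Lp ℝ p μ →L[ℝ] Lp ℝ p μ)
    (hT : ∀ φ : Lp ℝ p μ, ⇑(T φ) =ᵐ[μ] (⇑φ ∘ odometer α)) (k : ℕ) :
    ∀ (v : Lp ℝ p μ) (vf : (∀ i, Fin (α i)) → ℝ), ⇑v =ᵐ[μ] vf →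
      ⇑((⇑T)^[k] v) =ᵐ[μ] vf ∘ (odometer α)^[k] := by
  induction k with
  | zero => intro v vf h; simpa using h
  | succ n ih =>
    intro v vf h
    rw [Function.iterate_succ_apply]
    have h1 : ⇑(T v) =ᵐ[μ] vf ∘ odometer α := (hT v).trans (ae_comp hstar h)
    have h2 := ih (T v) (vf ∘ odometer α) h1
    have h3 : (vf ∘ odometer α) ∘ (odometer α)^[n] = vf ∘ (odometer α)^[n+1] := by
      rw [Function.iterate_succ']
      rfl
    rw [← h3]
    exact h2

lemma two_pow_le_Mp (hα : ∀ i, 2 ≤ α i) (m : ℕ) : 2^m ≤ Mp α m := by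
  induction m with
  | zero => simp [Mp]
  | succ n ih =>
    rw [pow_succ, Mp_succ]
    exact Nat.mul_le_mul ih (hα n)

lemma exists_level (hα : ∀ i, 2 ≤ α i) {k : ℕ} (hk : 1 ≤ k) :
    ∃ s, Mp α s ≤ k ∧ k < Mp α (s+1) := by
  have hex : ∃ j, k < Mp α j :=
    ⟨k, lt_of_lt_of_le (Nat.lt_two_pow_self (n := k)) (two_pow_le_Mp hα k)⟩
  have hspec := Nat.find_spec hex
  have hj0 : Nat.find hex ≠ 0 := by
    intro h
    rw [h] at hspec
    simp [Mp] at hspec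
    omega
  obtain ⟨s, hs⟩ := Nat.exists_eq_succ_of_ne_zero hj0
  rw [hs] at hspec
  refine ⟨s, ?_, hspec⟩
  by_contra h
  exact Nat.find_min hex (by omega : s < Nat.find hex) (by omega)

lemma exists_argmax (hα : ∀ i, 2 ≤ α i) (w : ∀ i, Fin (α i) → NNReal) (i : ℕ) :
    ∃ b : Fin (α i), (⨆ j, w i j) = w i b := by
  haveI : Nonempty (Fin (α i)) := ⟨⟨0, by have := hα i; omega⟩⟩
  obtain ⟨b, -, hb⟩ := Finset.exists_max_image Finset.univ (w i)
    ⟨Classical.arbitrary _, Finset.mem_univ _⟩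
  exact ⟨b, le_antisymm (ciSup_le fun j => hb j (Finset.mem_univ j))
    (le_ciSup (Set.finite_range _).bddAbove b)⟩

lemma W_of_fin (hα : ∀ i, 2 ≤ α i) (i : ℕ) (b : Fin (α i)) :
    W α hα w i (b : ℕ) = w i b :=
  congrArg (w i) (Fin.ext (Nat.mod_eq_of_lt b.2))

end Helpers2


open OdoAux OdoAux2 OdoNu in
/-- If `lim_i η_i = 1`, then the composition operator `T_f` on `L^p(μ)` is
topologically mixing. -/
theorem mixing_of_eta_tendsto_one
    (α : ℕ → ℕ) (hα : ∀ i, 2 ≤ α i)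
    (w : ∀ i, Fin (α i) → NNReal)
    (hw_pos : ∀ i j, 0 < w i j) (hw_sum : ∀ i, ∑ j, w i j = 1)
    (μ : Measure (∀ i, Fin (α i))) (hμ : IsProductMeasure α w μ)
    (hstar : CondStar μ (odometer α))
    (p : ENNReal) [Fact (1 ≤ p)] (hp' : p ≠ ⊤)
    (T : Lp ℝ p μ →L[ℝ] Lp ℝ p μ)
    (hT : ∀ φ : Lp ℝ p μ, ⇑(T φ) =ᵐ[μ] (⇑φ ∘ odometer α))
    (heta : Tendsto (fun i => ((⨆ j, w i j : NNReal) : ℝ)) atTop (𝓝 1)) :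
    TopMixing ⇑T := by
  classical
  haveI hprob : IsProbabilityMeasure μ := isProbability hμ
  have hp1 : (1:ENNReal) ≤ p := Fact.out
  have hp0 : p ≠ 0 := by
    intro h; rw [h] at hp1; exact absurd hp1 (by norm_num)
  have hpt_pos : 0 < p.toReal := ENNReal.toReal_pos hp0 hp'
  intro U V hU hV hUne hVne
  obtain ⟨φ₀, hφ₀⟩ := hUne
  obtain ⟨ψ₀, hψ₀⟩ := hVne
  obtain ⟨ε₁, hε₁, hball₁⟩ := Metric.isOpen_iff.mp hU φ₀ hφ₀
  obtain ⟨ε₂, hε₂, hball₂⟩ := Metric.isOpen_iff.mp hV ψ₀ hψ₀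
  obtain ⟨ε, hε, hεle₁, hεle₂⟩ : ∃ ε : ℝ, 0 < ε ∧ ε ≤ ε₁ ∧ ε ≤ ε₂ :=
    ⟨min ε₁ ε₂, lt_min hε₁ hε₂, min_le_left _ _, min_le_right _ _⟩
  have hdense := MeasureTheory.Lp.simpleFunc.denseRange (E := ℝ) (p := p) (μ := μ) hp'
  obtain ⟨φS, hφS⟩ := Metric.denseRange_iff.mp hdense φ₀ (ε/4) (by positivity)
  obtain ⟨ψS, hψS⟩ := Metric.denseRange_iff.mp hdense ψ₀ (ε/4) (by positivity)
  set φ : (∀ i, Fin (α i)) → ℝ := ⇑(MeasureTheory.Lp.simpleFunc.toSimpleFunc φS) with hφdef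
  set ψ : (∀ i, Fin (α i)) → ℝ := ⇑(MeasureTheory.Lp.simpleFunc.toSimpleFunc ψS) with hψdef
  have hφae : ⇑(φS : Lp ℝ p μ) =ᵐ[μ] φ :=
    (MeasureTheory.Lp.simpleFunc.toSimpleFunc_eq_toFun φS).symm
  have hψae : ⇑(ψS : Lp ℝ p μ) =ᵐ[μ] ψ :=
    (MeasureTheory.Lp.simpleFunc.toSimpleFunc_eq_toFun ψS).symm
  have hφmeas : Measurable φ := (MeasureTheory.Lp.simpleFunc.toSimpleFunc φS).measurable
  have hψmeas : Measurable ψ := (MeasureTheory.Lp.simpleFunc.toSimpleFunc ψS).measurable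
  obtain ⟨Cφ, hCφ⟩ := (MeasureTheory.Lp.simpleFunc.toSimpleFunc φS).exists_forall_norm_le
  obtain ⟨Cψ, hCψ⟩ := (MeasureTheory.Lp.simpleFunc.toSimpleFunc ψS).exists_forall_norm_le
  haveI hXne : Nonempty (∀ i, Fin (α i)) := ⟨fun i => ⟨0, by have := hα i; omega⟩⟩
  set C : ℝ := max Cφ Cψ + 1 with hCdef
  have hCφ0 : 0 ≤ Cφ := le_trans (norm_nonneg _) (hCφ (Classical.arbitrary _))
  have hC1 : 1 ≤ C := by
    have := le_trans hCφ0 (le_max_left Cφ Cψ)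
    rw [hCdef]; linarith
  have hCpos : 0 < C := by linarith
  have hφC : ∀ x, ‖φ x‖ ≤ C := fun x =>
    (hCφ x).trans (by rw [hCdef]; linarith [le_max_left Cφ Cψ])
  have hψC : ∀ x, ‖ψ x‖ ≤ C := fun x =>
    (hCψ x).trans (by rw [hCdef]; linarith [le_max_right Cφ Cψ])
  -- numeric targets
  set a : ℝ := ε / (4*(2*C+1)) with hadef
  have hapos : 0 < a := by rw [hadef]; positivity
  set δE : ℝ≥0∞ := (ENNReal.ofReal a) ^ p.toReal with hδEdef
  have hδEpos : 0 < δE := ENNReal.rpow_pos (ENNReal.ofReal_pos.mpr hapos) ENNReal.ofReal_ne_top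
  have hδEne : δE ≠ ⊤ := ENNReal.rpow_ne_top_of_nonneg hpt_pos.le ENNReal.ofReal_ne_top
  set δ' : ℝ≥0 := δE.toNNReal with hδ'def
  have hδ'E : (δ' : ℝ≥0∞) = δE := ENNReal.coe_toNNReal hδEne
  have hδ'pos : 0 < δ' := ENNReal.toNNReal_pos hδEpos.ne' hδEne
  set θ : ℝ≥0 := δ' / 8 with hθdef
  have hθpos : 0 < θ := by rw [hθdef]; positivity
  have h8θ : ((8 * θ : ℝ≥0) : ℝ≥0∞) ≤ δE := by
    rw [hθdef, mul_comm, div_mul_cancel₀ _ (by norm_num : (8:ℝ≥0) ≠ 0), hδ'E]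
  -- choose N from heta
  have hev : ∀ᶠ i in Filter.atTop, 1 - (θ:ℝ)/2 < ((⨆ j, w i j : ℝ≥0) : ℝ) := by
    have hlt : (1 - (θ:ℝ)/2) < 1 := by
      have : (0:ℝ) < θ := hθpos
      linarith
    exact heta.eventually (eventually_gt_nhds hlt)
  obtain ⟨N, hN⟩ := Filter.eventually_atTop.mp hev
  have hweight : ∀ i, N ≤ i → ∃ b : Fin (α i), (1:ℝ≥0) ≤ w i b + θ := by
    intro i hi
    obtain ⟨b, hb⟩ := exists_argmax hα w i
    refine ⟨b, ?_⟩
    have h1 := hN i hi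
    rw [hb] at h1
    rw [← NNReal.coe_le_coe]
    push_cast
    have hθ0 : (0:ℝ) ≤ θ := θ.2
    linarith
  -- the mixing time
  refine ⟨max (Mp α N) 1, le_max_right _ _, ?_⟩
  intro k hk
  have hk1 : 1 ≤ k := le_trans (le_max_right _ _) hk
  have hkN : Mp α N ≤ k := le_trans (le_max_left _ _) hk
  obtain ⟨s, hs1, hs2⟩ := exists_level hα hk1
  have hsN : N ≤ s := by
    by_contra h
    have := Mp_le hα (by omega : s + 1 ≤ N)
    omega
  obtain ⟨bs, hbs⟩ := hweight s hsN
  obtain ⟨bs', hbs'⟩ := hweight (s+1) (by omega)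
  have hδs : 1 ≤ W α hα w s (bs : ℕ) + θ := by rwa [W_of_fin hα]
  have hδs' : 1 ≤ W α hα w (s+1) (bs' : ℕ) + θ := by rwa [W_of_fin hα]
  set m : ℕ := s + 2 with hmdef
  set M : ℕ := Mp α (s+2) with hMdef
  have hMpos : 0 < M := Mp_pos hα _
  have hkM : k < M := lt_of_lt_of_le hs2 (Mp_le hα (by omega))
  have hover := overlap_bound (w := w) hα hw_sum hs1 hs2 bs.2 bs'.2 hδs hδs'
  rw [← hMdef] at hover
  -- the good set
  set σf : ℕ → ℕ := fun e => (e + (M - k)) % M with hσdef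
  set G : Finset ℕ := (Finset.range M).filter
      (fun e => nu α hα w m (σf e) ≤ nu α hα w m e) with hGdef
  have hGsub : ∀ e ∈ G, e < M := fun e he => Finset.mem_range.mp (Finset.mem_filter.mp he).1
  set Eset : Set (∀ i, Fin (α i)) := {x | enc α m x ∈ G} with hEdef
  have hEmeas : MeasurableSet Eset := measurableSet_encMem hα m G
  have hencl : ∀ x : ∀ i, Fin (α i), enc α m x < M := fun x => enc_lt hα m x
  have hEc : μ Esetᶜ ≤ ((8 * θ : ℝ≥0) : ℝ≥0∞) := by
    have hset : Esetᶜ = {x | enc α m x ∈ Finset.range M \ G} := by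
      ext x
      simp only [hEdef, Set.mem_compl_iff, Set.mem_setOf_eq, Finset.mem_sdiff, Finset.mem_range]
      exact ⟨fun h => ⟨hencl x, h⟩, fun h => h.2⟩
    rw [hset, measure_encMem hα hμ _
      (fun e he => Finset.mem_range.mp (Finset.mem_sdiff.mp he).1)]
    rw [ENNReal.coe_le_coe]
    calc ∑ e ∈ Finset.range M \ G, nu α hα w m e
        ≤ ∑ e ∈ Finset.range M \ G, min (nu α hα w m e) (nu α hα w m (σf e)) := by
          apply Finset.sum_le_sum
          intro e he
          obtain ⟨he1, he2⟩ := Finset.mem_sdiff.mp he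
          have hno : ¬ (nu α hα w m (σf e) ≤ nu α hα w m e) := fun hcon =>
            he2 (Finset.mem_filter.mpr ⟨he1, hcon⟩)
          exact le_min le_rfl (le_of_not_ge hno)
      _ ≤ ∑ e ∈ Finset.range M, min (nu α hα w m e) (nu α hα w m (σf e)) :=
          Finset.sum_le_sum_of_subset Finset.sdiff_subset
      _ ≤ 8 * θ := hover
  -- pull-back of the good set
  set G' : Finset ℕ := (Finset.range M).filter (fun e => (e + k) % M ∈ G) with hG'def
  have hσinv1 : ∀ e < M, σf ((e + k) % M) = e := by
    intro e he
    show ((e + k) % M + (M - k)) % M = e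
    rw [Nat.mod_add_mod, show e + k + (M - k) = e + M by omega, Nat.add_mod_right,
      Nat.mod_eq_of_lt he]
  have hσinv2 : ∀ e < M, (σf e + k) % M = e := by
    intro e he
    show ((e + (M - k)) % M + k) % M = e
    rw [Nat.mod_add_mod, show e + (M - k) + k = e + M by omega, Nat.add_mod_right,
      Nat.mod_eq_of_lt he]
  have hSset_eq : (odometer α)^[k] ⁻¹' Eset = {x | enc α m x ∈ G'} := by
    ext x
    simp only [Set.mem_preimage, hEdef, Set.mem_setOf_eq, hG'def, Finset.mem_filter,
      Finset.mem_range]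
    rw [enc_iterate hα m k x, ← hMdef]
    exact ⟨fun h => ⟨hencl x, h⟩, fun h => h.2⟩
  have hS : μ ((odometer α)^[k] ⁻¹' Eset) ≤ ((8 * θ : ℝ≥0) : ℝ≥0∞) := by
    rw [hSset_eq, measure_encMem hα hμ _
      (fun e he => Finset.mem_range.mp (Finset.mem_filter.mp he).1)]
    rw [ENNReal.coe_le_coe]
    have hbij : ∑ e ∈ G', nu α hα w m e = ∑ e ∈ G, nu α hα w m (σf e) := by
      apply Finset.sum_nbij' (i := fun e => (e + k) % M) (j := σf)
      · intro e he
        exact (Finset.mem_filter.mp he).2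
      · intro e he
        apply Finset.mem_filter.mpr
        refine ⟨Finset.mem_range.mpr (Nat.mod_lt _ hMpos), ?_⟩
        rw [hσinv2 e (hGsub e he)]
        exact he
      · intro e he
        exact hσinv1 e (Finset.mem_range.mp (Finset.mem_filter.mp he).1)
      · intro e he
        exact hσinv2 e (hGsub e he)
      · intro e he
        rw [hσinv1 e (Finset.mem_range.mp (Finset.mem_filter.mp he).1)]
    rw [hbij]
    calc ∑ e ∈ G, nu α hα w m (σf e)
        ≤ ∑ e ∈ G, min (nu α hα w m e) (nu α hα w m (σf e)) :=
          Finset.sum_le_sum (fun e he => le_min (Finset.mem_filter.mp he).2 le_rfl)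
      _ ≤ ∑ e ∈ Finset.range M, min (nu α hα w m e) (nu α hα w m (σf e)) :=
          Finset.sum_le_sum_of_subset (Finset.filter_subset _ _)
      _ ≤ 8 * θ := hover
  -- the perturbed vector
  set fk : (∀ i, Fin (α i)) → (∀ i, Fin (α i)) := (odometer α)^[k] with hfkdef
  set gk : (∀ i, Fin (α i)) → (∀ i, Fin (α i)) := (odoInv α hα)^[k] with hgkdef
  have hgkmeas : Measurable gk := (measurable_odoInv hα).iterate k
  set uf : (∀ i, Fin (α i)) → ℝ := Eset.piecewise φ (ψ ∘ gk) with hufdef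
  have hufmeas : Measurable uf := Measurable.piecewise hEmeas hφmeas (hψmeas.comp hgkmeas)
  have hufb : ∀ x, ‖uf x‖ ≤ C := by
    intro x
    rw [hufdef]
    by_cases hx : x ∈ Eset
    · rw [Set.piecewise_eq_of_mem _ _ _ hx]; exact hφC x
    · rw [Set.piecewise_eq_of_notMem _ _ _ hx]; exact hψC (gk x)
  have hufLp : MemLp uf p μ :=
    MemLp.of_bound hufmeas.aestronglyMeasurable C (Filter.Eventually.of_forall hufb)
  set u : Lp ℝ p μ := hufLp.toLp uf with hudef
  have huae : ⇑u =ᵐ[μ] uf := MeasureTheory.MemLp.coeFn_toLp hufLp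
  -- generic estimate
  have hkey : ∀ (S : Set (∀ i, Fin (α i))) (h : (∀ i, Fin (α i)) → ℝ),
      MeasurableSet S → μ S ≤ ((8*θ:ℝ≥0):ℝ≥0∞) → (∀ x, ‖h x‖ ≤ 2*C) →
      eLpNorm (S.indicator h) p μ ≤ ENNReal.ofReal (ε/4) := by
    intro S h hSm hSμ hhb
    have h1 : eLpNorm (S.indicator h) p μ
        ≤ eLpNorm (S.indicator (fun _ => (2*C : ℝ))) p μ := by
      apply eLpNorm_mono
      intro x
      by_cases hx : x ∈ S
      · rw [Set.indicator_of_mem hx, Set.indicator_of_mem hx]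
        exact (hhb x).trans (le_abs_self _)
      · rw [Set.indicator_of_notMem hx, Set.indicator_of_notMem hx]
    have h2 : eLpNorm (S.indicator (fun _ => (2*C:ℝ))) p μ
        = ‖(2*C:ℝ)‖₊ * μ S ^ (1/p.toReal) :=
      eLpNorm_indicator_const hSm hp0 hp'
    have h3 : μ S ^ (1/p.toReal) ≤ ENNReal.ofReal a := by
      have h4 : μ S ≤ δE := le_trans hSμ h8θ
      have h5 := ENNReal.rpow_le_rpow h4 (by positivity : (0:ℝ) ≤ 1/p.toReal)
      rwa [hδEdef, ← ENNReal.rpow_mul, mul_one_div_cancel hpt_pos.ne', ENNReal.rpow_one] at h5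
    calc eLpNorm (S.indicator h) p μ ≤ ‖(2*C:ℝ)‖₊ * μ S ^ (1/p.toReal) := h1.trans h2.le
      _ ≤ ‖(2*C:ℝ)‖₊ * ENNReal.ofReal a := mul_le_mul_right h3 _
      _ = ENNReal.ofReal (2*C) * ENNReal.ofReal a := by
          rw [← Real.enorm_eq_ofReal (show (0:ℝ) ≤ 2*C by positivity)]; rfl
      _ = ENNReal.ofReal (2*C*a) := (ENNReal.ofReal_mul (by positivity)).symm
      _ ≤ ENNReal.ofReal (ε/4) := by
          apply ENNReal.ofReal_le_ofReal
          have h2C1 : (0:ℝ) < 2*C+1 := by linarith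
          have h6 : 2*C*a = (2*C/(2*C+1)) * (ε/4) := by
            rw [hadef]; field_simp
          rw [h6]
          have h7 : 2*C/(2*C+1) ≤ 1 := by
            rw [div_le_one h2C1]; linarith
          calc (2*C/(2*C+1)) * (ε/4) ≤ 1 * (ε/4) :=
              mul_le_mul_of_nonneg_right h7 (by positivity)
            _ = ε/4 := one_mul _
  -- u is close to φS
  have hdiff1 : (fun x => uf x - φ x) = Esetᶜ.indicator (fun x => ψ (gk x) - φ x) := by
    funext x
    by_cases hx : x ∈ Eset
    · rw [hufdef]
      rw [Set.piecewise_eq_of_mem _ _ _ hx, Set.indicator_of_notMem (by simpa using hx)]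
      simp
    · rw [hufdef, Set.piecewise_eq_of_notMem _ _ _ hx,
        Set.indicator_of_mem (by simpa using hx)]
      rfl
  have hu_close : dist u (φS : Lp ℝ p μ) ≤ ε/4 := by
    rw [dist_eq_norm, MeasureTheory.Lp.norm_def]
    apply ENNReal.toReal_le_of_le_ofReal (by positivity)
    have hae : ⇑(u - (φS : Lp ℝ p μ)) =ᵐ[μ] Esetᶜ.indicator (fun x => ψ (gk x) - φ x) := by
      filter_upwards [MeasureTheory.Lp.coeFn_sub u (φS : Lp ℝ p μ), huae, hφae]
        with x h1 h2 h3
      rw [h1, Pi.sub_apply, h2, h3, ← congrFun hdiff1 x]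
    rw [eLpNorm_congr_ae hae]
    apply hkey _ _ hEmeas.compl hEc
    intro x
    calc ‖ψ (gk x) - φ x‖ ≤ ‖ψ (gk x)‖ + ‖φ x‖ := norm_sub_le _ _
      _ ≤ C + C := add_le_add (hψC _) (hφC _)
      _ = 2*C := by ring
  -- T^k u is close to ψS
  have hTk : ⇑((⇑T)^[k] u) =ᵐ[μ] uf ∘ fk := T_iterate hstar T hT k u uf huae
  have hgkfk : ∀ x, gk (fk x) = x := fun x => odoInv_iterate_odometer hα k x
  have hdiff2 : (fun x => uf (fk x) - ψ x)
      = (fk ⁻¹' Eset).indicator (fun x => φ (fk x) - ψ x) := by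
    funext x
    by_cases hx : fk x ∈ Eset
    · rw [Set.indicator_of_mem (by exact hx : x ∈ fk ⁻¹' Eset), hufdef,
        Set.piecewise_eq_of_mem _ _ _ hx]
    · rw [Set.indicator_of_notMem (by exact hx : x ∉ fk ⁻¹' Eset), hufdef,
        Set.piecewise_eq_of_notMem _ _ _ hx]
      show ψ (gk (fk x)) - ψ x = 0
      rw [hgkfk x]
      simp
  have hTk_close : dist ((⇑T)^[k] u) (ψS : Lp ℝ p μ) ≤ ε/4 := by
    rw [dist_eq_norm, MeasureTheory.Lp.norm_def]
    apply ENNReal.toReal_le_of_le_ofReal (by positivity)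
    have hae : ⇑((⇑T)^[k] u - (ψS : Lp ℝ p μ))
        =ᵐ[μ] (fk ⁻¹' Eset).indicator (fun x => φ (fk x) - ψ x) := by
      filter_upwards [MeasureTheory.Lp.coeFn_sub ((⇑T)^[k] u) (ψS : Lp ℝ p μ), hTk, hψae]
        with x h1 h2 h3
      rw [h1, Pi.sub_apply, h2, h3, ← congrFun hdiff2 x]
      rfl
    rw [eLpNorm_congr_ae hae]
    have hfkmeas : MeasurableSet (fk ⁻¹' Eset) := by
      rw [hfkdef, hSset_eq]
      exact measurableSet_encMem hα m G'
    apply hkey _ _ hfkmeas hS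
    intro x
    calc ‖φ (fk x) - ψ x‖ ≤ ‖φ (fk x)‖ + ‖ψ x‖ := norm_sub_le _ _
      _ ≤ C + C := add_le_add (hφC _) (hψC _)
      _ = 2*C := by ring
  -- conclude
  refine ⟨(⇑T)^[k] u, ⟨u, ?_, rfl⟩, ?_⟩
  · apply hball₁
    rw [Metric.mem_ball]
    calc dist u φ₀ ≤ dist u (φS : Lp ℝ p μ) + dist (φS : Lp ℝ p μ) φ₀ := dist_triangle _ _ _
      _ ≤ ε/4 + ε/4 := add_le_add hu_close (by rw [dist_comm]; exact hφS.le)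
      _ < ε₁ := by linarith
  · apply hball₂
    rw [Metric.mem_ball]
    calc dist ((⇑T)^[k] u) ψ₀
        ≤ dist ((⇑T)^[k] u) (ψS : Lp ℝ p μ) + dist (ψS : Lp ℝ p μ) ψ₀ := dist_triangle _ _ _
      _ ≤ ε/4 + ε/4 := add_le_add hTk_close (by rw [dist_comm]; exact hψS.le)
      _ < ε₂ := by linarith
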